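/- Let P be a connected pircon with rank function ρ, let w ∈ P, and let M and N be quasi special partial matchings of the finite poset P_{≤w}. Then every orbit O of the group of permutations of P_{≤w} generated by M and N has a minimum 0̂_O and a maximum 1̂_O and equals the interval [0̂_O, 1̂_O] of P_{≤w}. Moreover, exactly one of the following holds: (i) O is a chain, its minimum is fixed by M or by N, and its maximum is fixed by M or by N (O is chain-like); or (ii) no element of O is fixed by M or by N, any two elements of O of different rank are comparable, and O contains exactly two elements of each rank strictly between ρ(0̂_O) and ρ(1̂_O) (O is dihedral). -/

import Mathlib

/-- A quasi special partial matching of the order ideal `P_{≤w}`. -/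
def IsQSPMOn {P : Type*} [PartialOrder P] (w : P) (M : P → P) : Prop :=
  (∀ u : P, u ≤ w → M u ≤ w) ∧
  (∀ u : P, u ≤ w → M (M u) = u) ∧
  (∀ u : P, u ≤ w → M u ⋖ u ∨ M u = u ∨ u ⋖ M u) ∧
  ∀ u t : P, u ≤ w → t ≤ w → u ⋖ t → M u ≠ t → M u < M t

/-- A special partial matching of the order ideal `P_{≤w}` (whose maximum is `w`). -/
def IsSPMOn {P : Type*} [PartialOrder P] (w : P) (M : P → P) : Prop :=
  IsQSPMOn w M ∧ M w ⋖ w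

/-- A pircon: for every non-minimal `x`, the order ideal `P_{≤x}` is finite and admits
a special partial matching. -/
def IsPircon (P : Type*) [PartialOrder P] : Prop :=
  ∀ x : P, ¬ IsMin x → (Set.Iic x).Finite ∧ ∃ M : P → P, IsSPMOn x M

/-- The equivalence relation generated by two matchings: `v` is reachable from `u`
by applying `M` and `N`; its classes are the orbits of the group `⟨M,N⟩`. -/
def orbRel {P : Type*} (M N : P → P) : P → P → Prop :=
  Relation.ReflTransGen fun a b => M a = b ∨ N a = b

/-- The orbit of `u` under the group generated by `M` and `N`. -/
def orb {P : Type*} (M N : P → P) (u : P) : Set P := {v | orbRel M N u v}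

set_option linter.unusedSectionVars false
set_option maxHeartbeats 1000000

namespace OrbitProofX

variable {P : Type*} [PartialOrder P]

lemma exists_le_covby {w x y : P} (hfin : (Set.Iic w).Finite) (hy : y ≤ w) (hxy : x < y) :
    ∃ z, x ≤ z ∧ z ⋖ y := by
  classical
  have hs : ({z | x ≤ z ∧ z < y} : Set P).Finite :=
    hfin.subset fun z hz => le_trans hz.2.le hy
  obtain ⟨z, hz, hmax⟩ := hs.toFinset.exists_maximal
    ⟨x, by simp only [Set.Finite.mem_toFinset, Set.mem_setOf_eq]; exact ⟨le_rfl, hxy⟩⟩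
  rw [Set.Finite.mem_toFinset, Set.mem_setOf_eq] at hz
  refine ⟨z, hz.1, hz.2, fun c hzc hcy => ?_⟩
  have hcmem : c ∈ hs.toFinset := by
    rw [Set.Finite.mem_toFinset, Set.mem_setOf_eq]
    exact ⟨hz.1.trans hzc.le, hcy⟩
  exact lt_irrefl _ (hzc.trans_le (hmax hcmem hzc.le))

lemma exists_covby_le {w x y : P} (hfin : (Set.Iic w).Finite) (hy : y ≤ w) (hxy : x < y) :
    ∃ z, x ⋖ z ∧ z ≤ y := by
  classical
  have hs : ({z | x < z ∧ z ≤ y} : Set P).Finite :=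
    hfin.subset fun z hz => le_trans hz.2 hy
  obtain ⟨z, hz, hmin⟩ := hs.toFinset.exists_minimal
    ⟨y, by simp only [Set.Finite.mem_toFinset, Set.mem_setOf_eq]; exact ⟨hxy, le_rfl⟩⟩
  rw [Set.Finite.mem_toFinset, Set.mem_setOf_eq] at hz
  refine ⟨z, ⟨hz.1, fun c hxc hcz => ?_⟩, hz.2⟩
  have hcmem : c ∈ hs.toFinset := by
    rw [Set.Finite.mem_toFinset, Set.mem_setOf_eq]
    exact ⟨hxc, hcz.le.trans hz.2⟩
  exact lt_irrefl _ (hcz.trans_le (hmin hcmem hcz.le))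


variable {ρ : P → ℕ} {w : P}


lemma rank_lt (hρcov : ∀ a b : P, a ⋖ b → ρ b = ρ a + 1) (hfin : (Set.Iic w).Finite)
    {x y : P} (hy : y ≤ w) (hxy : x < y) : ρ x < ρ y := by
  suffices H : ∀ k y, y ≤ w → ρ y = k → ∀ x, x < y → ρ x < k from H (ρ y) y hy rfl x hxy
  intro k
  induction k using Nat.strong_induction_on with
  | _ k ih =>
    intro y hyw hk x hxy
    obtain ⟨z, hxz, hzy⟩ := exists_le_covby hfin hyw hxy
    have hz : ρ y = ρ z + 1 := hρcov _ _ hzy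
    rcases eq_or_lt_of_le hxz with rfl | hlt
    · omega
    · have := ih (ρ z) (by omega) z (hzy.le.trans hyw) rfl x hlt
      omega

lemma rank_le (hρcov : ∀ a b : P, a ⋖ b → ρ b = ρ a + 1) (hfin : (Set.Iic w).Finite)
    {x y : P} (hy : y ≤ w) (hxy : x ≤ y) : ρ x ≤ ρ y := by
  rcases eq_or_lt_of_le hxy with rfl | h
  · exact le_rfl
  · exact (rank_lt hρcov hfin hy h).le

lemma eq_of_le_rank (hρcov : ∀ a b : P, a ⋖ b → ρ b = ρ a + 1) (hfin : (Set.Iic w).Finite)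
    {x y : P} (hy : y ≤ w) (hxy : x ≤ y) (hr : ρ y ≤ ρ x) : x = y := by
  rcases eq_or_lt_of_le hxy with rfl | h
  · rfl
  · exact absurd (rank_lt hρcov hfin hy h) (by omega)

lemma covby_of_lt_rank (hρcov : ∀ a b : P, a ⋖ b → ρ b = ρ a + 1) (hfin : (Set.Iic w).Finite)
    {x y : P} (hy : y ≤ w) (hxy : x < y) (hr : ρ y ≤ ρ x + 1) : x ⋖ y := by
  refine ⟨hxy, fun c hxc hcy => ?_⟩
  have h1 : ρ x < ρ c := rank_lt hρcov hfin (hcy.le.trans hy) hxc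
  have h2 : ρ c < ρ y := rank_lt hρcov hfin hy hcy
  omega

section Lift

variable (hρcov : ∀ a b : P, a ⋖ b → ρ b = ρ a + 1) (hfin : (Set.Iic w).Finite)
variable {f : P → P} (hf : IsQSPMOn w f)

include hρcov hfin hf

lemma lift_down_down {u v : P} (huv : u ≤ v) (hvw : v ≤ w)
    (hfu : f u ⋖ u) (hfv : f v ⋖ v) : f u ≤ f v := by
  suffices H : ∀ k v, v ≤ w → ρ v = k → ∀ u, u ≤ v → f u ⋖ u → f v ⋖ v → f u ≤ f v from
    H (ρ v) v hvw rfl u huv hfu hfv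
  clear huv hvw hfu hfv
  intro k
  induction k using Nat.strong_induction_on with
  | _ k ih =>
    intro v hvw hk u huv hfu hfv
    rcases eq_or_lt_of_le huv with rfl | hlt
    · exact le_rfl
    · obtain ⟨c, huc, hcv⟩ := exists_le_covby hfin hvw hlt
      have hcw : c ≤ w := hcv.lt.le.trans hvw
      by_cases hfc : f c = v
      · have hvc : f v = c := by rw [← hfc, hf.2.1 c hcw]
        rw [hvc]
        exact hfu.lt.le.trans huc
      · have hlift := hf.2.2.2 c v hcw hvw hcv hfc
        rcases hf.2.2.1 c hcw with h1 | h1 | h1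
        · have hrc : ρ v = ρ c + 1 := hρcov _ _ hcv
          have := ih (ρ c) (by omega) c hcw rfl u huc hfu h1
          exact this.trans hlift.le
        · calc f u ≤ u := hfu.lt.le
            _ ≤ c := huc
            _ = f c := h1.symm
            _ ≤ f v := hlift.le
        · exfalso
          have r1 : ρ (f c) = ρ c + 1 := hρcov _ _ h1
          have r2 : ρ v = ρ c + 1 := hρcov _ _ hcv
          have r3 : ρ v = ρ (f v) + 1 := hρcov _ _ hfv
          have r4 : ρ (f c) < ρ (f v) := rank_lt hρcov hfin (hf.1 v hvw) hlift
          omega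

lemma lift_le_fix {u v : P} (huv : u ≤ v) (hvw : v ≤ w)
    (hfv : f v ⋖ v) (hfu : u ≤ f u) : u ≤ f v := by
  suffices H : ∀ g u v, v ≤ w → u ≤ v → ρ v - ρ u ≤ g → f v ⋖ v → u ≤ f u → u ≤ f v from
    H (ρ v - ρ u) u v hvw huv le_rfl hfv hfu
  clear huv hvw hfv hfu
  intro g
  induction g with
  | zero =>
    intro u v hvw huv hg hfv hfu
    exfalso
    have : u = v := eq_of_le_rank hρcov hfin hvw huv (by omega)
    subst this
    exact absurd (lt_of_le_of_lt hfu hfv.lt) (lt_irrefl u)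
  | succ g ihg =>
    intro u v hvw huv hg hfv hfu
    rcases eq_or_lt_of_le huv with rfl | hlt
    · exact absurd (lt_of_le_of_lt hfu hfv.lt) (lt_irrefl u)
    obtain ⟨c, huc, hcv⟩ := exists_covby_le hfin hvw hlt
    have hcw : c ≤ w := hcv.trans hvw
    rcases eq_or_lt_of_le hcv with rfl | hcvlt
    · -- u ⋖ v
      by_cases hfu2 : f u = c
      · have : u = f c := by rw [← hfu2, hf.2.1 u (huc.lt.le.trans hcw)]
        exact this.le
      · have := hf.2.2.2 u c (huc.lt.le.trans hcw) hcw huc hfu2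
        exact hfu.trans this.le
    · have hruc : ρ c = ρ u + 1 := hρcov _ _ huc
      have hruv : ρ c < ρ v := rank_lt hρcov hfin hvw hcvlt
      rcases hf.2.2.1 c hcw with h1 | h1 | h1
      · -- f c ⋖ c
        by_cases hfu2 : f u = c
        · have hufc : u = f c := by rw [← hfu2, hf.2.1 u (huc.lt.le.trans hcw)]
          have := lift_down_down hρcov hfin hf hcv hvw h1 hfv
          exact hufc.le.trans this
        · exfalso
          have hlift := hf.2.2.2 u c (huc.lt.le.trans hcw) hcw huc hfu2
          have r1 : ρ (f c) + 1 = ρ c := (hρcov _ _ h1).symm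
          have r2 : ρ u ≤ ρ (f u) := rank_le hρcov hfin (hf.1 u (huc.lt.le.trans hcw)) hfu
          have r3 : ρ (f u) < ρ (f c) := rank_lt hρcov hfin (hf.1 c hcw) hlift
          omega
      · have := ihg c v hvw hcv (by omega) hfv (le_of_eq h1.symm)
        exact (huc.lt.le).trans this
      · have := ihg c v hvw hcv (by omega) hfv h1.lt.le
        exact (huc.lt.le).trans this

end Lift

section Orb

variable {M N : P → P} (hM : IsQSPMOn w M) (hN : IsQSPMOn w N)

include hM hN

lemma orb_le_w {u v : P} (hu : u ≤ w) (hv : v ∈ orb M N u) : v ≤ w := by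
  induction hv with
  | refl => exact hu
  | tail h step ih =>
    rcases step with rfl | rfl
    · exact hM.1 _ ih
    · exact hN.1 _ ih

lemma orb_symm_mem {u v : P} (hu : u ≤ w) (hv : v ∈ orb M N u) : u ∈ orb M N v := by
  induction hv with
  | refl => exact Relation.ReflTransGen.refl
  | @tail b c h step ih =>
    have hbw : b ≤ w := orb_le_w hM hN hu h
    rcases step with h' | h'
    · exact Relation.ReflTransGen.head (Or.inl (by rw [← h', hM.2.1 b hbw])) ih
    · exact Relation.ReflTransGen.head (Or.inr (by rw [← h', hN.2.1 b hbw])) ih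

lemma orb_eq_of_mem {u t : P} (hu : u ≤ w) (ht : t ∈ orb M N u) :
    orb M N t = orb M N u := by
  ext v
  constructor
  · intro hv
    exact Relation.ReflTransGen.trans ht hv
  · intro hv
    exact Relation.ReflTransGen.trans (orb_symm_mem hM hN hu ht) hv

end Orb

lemma orb_comm (M N : P → P) (u : P) : orb M N u = orb N M u := by
  ext v
  constructor <;> intro h <;>
    exact Relation.ReflTransGen.mono (fun a b hab => Or.symm hab) _ _ h

lemma orb_self (M N : P → P) (u : P) : u ∈ orb M N u := Relation.ReflTransGen.refl

lemma orb_stepM (M N : P → P) {u t : P} (ht : t ∈ orb M N u) : M t ∈ orb M N u :=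
  Relation.ReflTransGen.tail ht (Or.inl rfl)

lemma orb_stepN (M N : P → P) {u t : P} (ht : t ∈ orb M N u) : N t ∈ orb M N u :=
  Relation.ReflTransGen.tail ht (Or.inr rfl)

section Desc

variable (hρcov : ∀ a b : P, a ⋖ b → ρ b = ρ a + 1) (hfin : (Set.Iic w).Finite)
variable {M N : P → P} (hM : IsQSPMOn w M) (hN : IsQSPMOn w N)
variable {O : Set P} {a : P}
variable (hOw : ∀ t ∈ O, t ≤ w)
variable (hclM : ∀ t ∈ O, M t ∈ O) (hclN : ∀ t ∈ O, N t ∈ O)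
variable (haw : a ≤ w) (hMa : a ≤ M a) (hNa : a ≤ N a)
variable (hdown : ∀ t ∈ O, ρ a < ρ t → (M t ∈ O ∧ M t ⋖ t) ∨ (N t ∈ O ∧ N t ⋖ t))

include hρcov hfin hM hN hOw hclM hclN haw hMa hNa hdown

lemma desc_step : ∀ j z C, C ∈ O → ρ C ≤ j → a ≤ z → z ⋖ C → z ∈ O := by
  intro j
  induction j with
  | zero =>
    intro z C hC hj haz hzC
    exfalso
    have h1 : ρ C = ρ z + 1 := hρcov _ _ hzC
    omega
  | succ j ih =>
    intro z C hC hj haz hzC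
    have hCw : C ≤ w := hOw C hC
    have hzw : z ≤ w := hzC.lt.le.trans hCw
    have hrzC : ρ C = ρ z + 1 := hρcov _ _ hzC
    by_cases hCj : ρ C ≤ j
    · exact ih z C hC hCj haz hzC
    have hra : ρ a < ρ C := by
      have : ρ a ≤ ρ z := rank_le hρcov hfin hzw haz
      omega
    have key : ∀ f : P → P, IsQSPMOn w f → (∀ t ∈ O, f t ∈ O) → a ≤ f a →
        f C ∈ O → f C ⋖ C → z ∈ O := by
      intro f hf hfcl hfa hfCO hfCcov
      by_cases hzf : z = f C
      · exact hzf ▸ hfCO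
      · have hfz_ne : f z ≠ C := by
          intro h
          apply hzf
          rw [← h]
          exact (hf.2.1 z hzw).symm
        have hlift : f z < f C := hf.2.2.2 z C hzw hCw hzC hfz_ne
        have hfCw : f C ≤ w := hOw _ hfCO
        have hrfC : ρ C = ρ (f C) + 1 := hρcov _ _ hfCcov
        have hrfz : ρ (f z) < ρ (f C) := rank_lt hρcov hfin hfCw hlift
        have hfzz : f z ⋖ z := by
          rcases hf.2.2.1 z hzw with h | h | h
          · exact h
          · exfalso; rw [h] at hrfz; omega
          · exfalso
            have : ρ (f z) = ρ z + 1 := hρcov _ _ h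
            omega
        have hrfz2 : ρ z = ρ (f z) + 1 := hρcov _ _ hfzz
        have hfzfC : f z ⋖ f C := covby_of_lt_rank hρcov hfin hfCw hlift (by omega)
        have hafz : a ≤ f z := lift_le_fix hρcov hfin hf haz hzw hfzz hfa
        have hfzO : f z ∈ O := ih (f z) (f C) hfCO (by omega) hafz hfzfC
        have := hfcl _ hfzO
        rwa [hf.2.1 z hzw] at this
    rcases hdown C hC hra with ⟨h1, h2⟩ | ⟨h1, h2⟩
    · exact key M hM hclM hMa h1 h2
    · exact key N hN hclN hNa h1 h2

lemma icc_subset_orb {b : P} (haO : a ∈ O) (hb : IsGreatest O b) :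
    Set.Icc a b ⊆ O := by
  have hbw : b ≤ w := hOw b hb.1
  suffices H : ∀ m z, z ∈ Set.Icc a b → ρ b - ρ z ≤ m → z ∈ O by
    intro z hz; exact H (ρ b - ρ z) z hz le_rfl
  intro m
  induction m with
  | zero =>
    intro z hz hm
    have : z = b := eq_of_le_rank hρcov hfin hbw hz.2 (by omega)
    exact this ▸ hb.1
  | succ m ih =>
    intro z hz hm
    rcases eq_or_lt_of_le hz.2 with rfl | hzb
    · exact hb.1
    obtain ⟨C, hzC, hCb⟩ := exists_covby_le hfin hbw hzb
    have hρC : ρ C = ρ z + 1 := hρcov _ _ hzC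
    have hCO : C ∈ O := by
      refine ih C ⟨hz.1.trans hzC.lt.le, hCb⟩ ?_
      have : ρ C ≤ ρ b := rank_le hρcov hfin hbw hCb
      have hzb' : ρ z < ρ b := rank_lt hρcov hfin hbw hzb
      omega
    exact desc_step hρcov hfin hM hN hOw hclM hclN haw hMa hNa hdown (ρ C) z C hCO le_rfl hz.1 hzC

end Desc

lemma chain_case
    (hρcov : ∀ a b : P, a ⋖ b → ρ b = ρ a + 1) (hfin : (Set.Iic w).Finite)
    {M N : P → P} (hM : IsQSPMOn w M) (hN : IsQSPMOn w N)
    {a : P} (haw : a ≤ w) (hMa : M a = a)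
    (hmin : ∀ t ∈ orb M N a, ρ a ≤ ρ t) :
    ∃ x y : P, IsLeast (orb M N a) x ∧ IsGreatest (orb M N a) y ∧
      orb M N a = Set.Icc x y ∧
      Xor'
        (IsChain (· ≤ ·) (orb M N a) ∧ (M x = x ∨ N x = x) ∧ (M y = y ∨ N y = y))
        ((∀ t ∈ orb M N a, M t ≠ t ∧ N t ≠ t) ∧
          (∀ s ∈ orb M N a, ∀ t ∈ orb M N a, ρ s ≠ ρ t → s < t ∨ t < s) ∧
          ∀ k : ℕ, ρ x < k → k < ρ y → {t ∈ orb M N a | ρ t = k}.ncard = 2) := by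
  classical
  obtain ⟨T, hTdef⟩ : ∃ T : ℕ → P → P, ∀ i, T i = if Even i then N else M :=
    ⟨fun i => if Even i then N else M, fun i => rfl⟩
  have hT : ∀ i, IsQSPMOn w (T i) := by
    intro i; rw [hTdef i]
    by_cases h : Even i
    · rw [if_pos h]; exact hN
    · rw [if_neg h]; exact hM
  have hTor : ∀ i, T i = M ∨ T i = N := by
    intro i; rw [hTdef i]
    by_cases h : Even i
    · rw [if_pos h]; exact Or.inr rfl
    · rw [if_neg h]; exact Or.inl rfl
  have hTper : ∀ i, T (i + 2) = T i := by
    intro i; rw [hTdef (i + 2), hTdef i]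
    have h2 : Even (i + 2) ↔ Even i := by rw [Nat.even_iff, Nat.even_iff]; omega
    by_cases h : Even i
    · rw [if_pos h, if_pos (h2.mpr h)]
    · rw [if_neg h, if_neg (fun hh => h (h2.mp hh))]
  have hT0 : T 0 = N := by rw [hTdef 0, if_pos Even.zero]
  have hT1 : T 1 = M := by rw [hTdef 1, if_neg Nat.not_even_one]
  have halt : ∀ i, (T i = M ∧ T (i + 1) = N) ∨ (T i = N ∧ T (i + 1) = M) := by
    intro i; rw [hTdef i, hTdef (i + 1)]
    have h2 : Even (i + 1) ↔ ¬ Even i := by rw [Nat.even_iff, Nat.even_iff]; omega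
    by_cases h : Even i
    · rw [if_pos h, if_neg (fun hh => (h2.mp hh) h)]
      exact Or.inr ⟨rfl, rfl⟩
    · rw [if_neg h, if_pos (h2.mpr h)]
      exact Or.inl ⟨rfl, rfl⟩
  obtain ⟨c, hc0, hcs⟩ : ∃ c : ℕ → P, c 0 = a ∧ ∀ n, c (n + 1) = T n (c n) :=
    ⟨fun n => Nat.rec a (fun i x => T i x) n, rfl, fun n => rfl⟩
  have hcw : ∀ n, c n ≤ w := by
    intro n; induction n with
    | zero => rw [hc0]; exact haw
    | succ n ih => rw [hcs n]; exact (hT n).1 _ ih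
  have hcO : ∀ n, c n ∈ orb M N a := by
    intro n; induction n with
    | zero => rw [hc0]; exact orb_self M N a
    | succ n ih =>
      rw [hcs n]
      rcases hTor n with h | h
      · rw [h]; exact orb_stepM M N ih
      · rw [h]; exact orb_stepN M N ih
  have hcinv : ∀ n, T n (c (n + 1)) = c n := by
    intro n; rw [hcs n]; exact (hT n).2.1 _ (hcw n)
  have hex : ∃ n, ¬ (c n ⋖ c (n + 1)) := by
    by_contra hcon
    push_neg at hcon
    have hrk : ∀ n, ρ (c n) = ρ a + n := by
      intro n; induction n with
      | zero => rw [hc0]; omega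
      | succ n ih => rw [hρcov _ _ (hcon n), ih]; omega
    have h1 : ρ (c (ρ w + 1)) ≤ ρ w := rank_le hρcov hfin le_rfl (hcw _)
    rw [hrk] at h1
    omega
  set k := Nat.find hex with hkdef
  have hk : ¬ (c k ⋖ c (k + 1)) := Nat.find_spec hex
  have hkc : ∀ i, i < k → c i ⋖ c (i + 1) := fun i hi => not_not.mp (Nat.find_min hex hi)
  have hrk : ∀ i, i ≤ k → ρ (c i) = ρ a + i := by
    intro i; induction i with
    | zero => intro _; rw [hc0]; omega
    | succ i ih =>
      intro hi
      rw [hρcov _ _ (hkc i (by omega)), ih (by omega)]; omega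
  have hmono : ∀ i j, i ≤ j → j ≤ k → c i ≤ c j := by
    intro i j hij hjk
    induction j with
    | zero => have : i = 0 := by omega
              rw [this]
    | succ j ih =>
      by_cases h : i = j + 1
      · rw [h]
      · have h1 : i ≤ j := by omega
        exact (ih h1 (by omega)).trans (hkc j (by omega)).lt.le
  -- the descent: no downward branching off the chain
  have D : ∀ j z, z ∈ orb M N a → j + 1 ≤ k → z ⋖ c (j + 1) → z ≠ c j → False := by
    intro j
    induction j using Nat.strong_induction_on with
    | _ j ih =>
      intro z hzO hjk hzc hne
      have hzw : z ≤ w := hzc.lt.le.trans (hcw (j + 1))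
      have hYc : T j (c (j + 1)) = c j := hcinv j
      have hYz_ne : T j z ≠ c (j + 1) := by
        intro h
        apply hne
        have h2 : T j (T j z) = z := (hT j).2.1 z hzw
        rw [h] at h2
        rw [← h2, hYc]
      have hlift : T j z < c j := by
        have := (hT j).2.2.2 z (c (j + 1)) hzw (hcw (j + 1)) hzc hYz_ne
        rwa [hYc] at this
      have hzO' : T j z ∈ orb M N a := by
        rcases hTor j with h | h
        · rw [h]; exact orb_stepM M N hzO
        · rw [h]; exact orb_stepN M N hzO
      have hrz : ρ (c (j + 1)) = ρ z + 1 := hρcov _ _ hzc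
      have hrcj1 : ρ (c (j + 1)) = ρ a + (j + 1) := hrk (j + 1) hjk
      have hrcj : ρ (c j) = ρ a + j := hrk j (by omega)
      have hrTz : ρ (T j z) < ρ (c j) := rank_lt hρcov hfin (hcw j) hlift
      rcases Nat.eq_zero_or_pos j with rfl | hj
      · exact absurd (hmin _ hzO') (by omega)
      · have hTzz : T j z ⋖ z := by
          rcases (hT j).2.2.1 z hzw with h | h | h
          · exact h
          · exfalso; rw [h] at hrTz; omega
          · exfalso; have := hρcov _ _ h; omega
        have hrTz2 : ρ z = ρ (T j z) + 1 := hρcov _ _ hTzz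
        have hTzcj : T j z ⋖ c j := covby_of_lt_rank hρcov hfin (hcw j) hlift (by omega)
        have hne2 : T j z ≠ c (j - 1) := by
          intro h
          have hz2 : z = T j (c (j - 1)) := by rw [← h, (hT j).2.1 z hzw]
          by_cases h1 : j = 1
          · subst h1
            rw [hT1, hc0, hMa] at hz2
            rw [hz2] at hrz
            omega
          · have h2 : j - 2 + 2 = j := by omega
            have h3 : T j = T (j - 2) := by
              conv_lhs => rw [← h2]
              exact hTper (j - 2)
            have h4 : j - 2 + 1 = j - 1 := by omega
            have h5 : T (j - 2) (c (j - 2 + 1)) = c (j - 2) := hcinv (j - 2)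
            rw [h4] at h5
            rw [h3, h5] at hz2
            have h6 : ρ (c (j - 2)) = ρ a + (j - 2) := hrk (j - 2) (by omega)
            rw [hz2] at hrz
            omega
        have hj1 : j - 1 + 1 = j := by omega
        exact ih (j - 1) (by omega) (T j z) hzO' (by omega)
          (by rw [hj1]; exact hTzcj) hne2
  have hstop : T k (c k) = c k := by
    rcases (hT k).2.2.1 (c k) (hcw k) with hbad | h | h
    · exfalso
      have hO' : T k (c k) ∈ orb M N a := by
        have := hcO (k + 1); rwa [hcs k] at this
      rcases Nat.eq_zero_or_pos k with hk0 | hk1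
      · have h1 := rank_lt hρcov hfin (hcw k) hbad.lt
        have h2 : ρ (c k) = ρ a + k := hrk k le_rfl
        rw [hk0] at h1 h2
        exact absurd (hmin _ hO') (by rw [hk0]; omega)
      · have hkk : k - 1 + 1 = k := by omega
        apply D (k - 1) (T k (c k)) hO' (by omega) (by rw [hkk]; exact hbad)
        -- T k (c k) ≠ c (k - 1)
        intro h
        have hck : c k = T k (c (k - 1)) := by rw [← h, (hT k).2.1 _ (hcw k)]
        have hrck : ρ (c k) = ρ a + k := hrk k le_rfl
        by_cases h1 : k = 1
        · rw [h1, hT1, hc0, hMa] at hck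
          rw [h1] at hrck
          rw [hck] at hrck
          omega
        · have h2 : k - 2 + 2 = k := by omega
          have h3 : T k = T (k - 2) := by
            conv_lhs => rw [← h2]
            exact hTper (k - 2)
          have h4 : k - 2 + 1 = k - 1 := by omega
          have h5 : T (k - 2) (c (k - 2 + 1)) = c (k - 2) := hcinv (k - 2)
          rw [h4] at h5
          rw [h3, h5] at hck
          have h6 : ρ (c (k - 2)) = ρ a + (k - 2) := hrk (k - 2) (by omega)
          rw [hck] at hrck
          omega
    · exact h
    · exfalso; rw [← hcs k] at h; exact hk h
  -- images of chain elements stay on the chain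
  have himg : ∀ i, i ≤ k → ∀ X : P → P, X = M ∨ X = N → ∃ j, j ≤ k ∧ c j = X (c i) := by
    intro i hik X hX
    by_cases hXTi : X = T i
    · subst hXTi
      rcases Nat.lt_or_ge i k with h | h
      · exact ⟨i + 1, by omega, hcs i⟩
      · have hik2 : i = k := le_antisymm hik h
        exact ⟨i, hik, by rw [hik2]; exact hstop.symm⟩
    · have hXT : X = T (i + 1) := by
        rcases halt i with ⟨h1, h2⟩ | ⟨h1, h2⟩ <;> rcases hX with rfl | rfl
        · exact absurd h1.symm hXTi
        · exact h2.symm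
        · exact h2.symm
        · exact absurd h1.symm hXTi
      rcases Nat.eq_zero_or_pos i with rfl | hi
      · refine ⟨0, by omega, ?_⟩
        rw [hXT]
        show c 0 = T (0 + 1) (c 0)
        rw [hc0, hT1, hMa]
      · have e : i - 1 + 2 = i + 1 := by omega
        have hTT : T (i + 1) = T (i - 1) := by rw [← e, hTper]
        have e2 : i - 1 + 1 = i := by omega
        refine ⟨i - 1, by omega, ?_⟩
        rw [hXT, hTT]
        have h5 := hcinv (i - 1)
        rw [e2] at h5
        exact h5.symm
  have hSorb : ∀ v ∈ orb M N a, ∃ i, i ≤ k ∧ c i = v := by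
    intro v hv
    induction hv with
    | refl => exact ⟨0, Nat.zero_le k, hc0⟩
    | @tail p q hp step ih =>
      obtain ⟨i, hik, hci⟩ := ih
      subst hci
      rcases step with h | h
      · obtain ⟨j, hj, hcj⟩ := himg i hik M (Or.inl rfl)
        exact ⟨j, hj, by rw [hcj, h]⟩
      · obtain ⟨j, hj, hcj⟩ := himg i hik N (Or.inr rfl)
        exact ⟨j, hj, by rw [hcj, h]⟩
  -- assemble
  have hleast : IsLeast (orb M N a) a := by
    constructor
    · exact orb_self M N a
    · intro t ht
      obtain ⟨i, hik, rfl⟩ := hSorb t ht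
      rw [← hc0]
      exact hmono 0 i (Nat.zero_le i) hik
  have hgreat : IsGreatest (orb M N a) (c k) := by
    constructor
    · exact hcO k
    · intro t ht
      obtain ⟨i, hik, rfl⟩ := hSorb t ht
      exact hmono i k hik le_rfl
  have hOw : ∀ t ∈ orb M N a, t ≤ w := fun t ht => orb_le_w hM hN haw ht
  have hclM : ∀ t ∈ orb M N a, M t ∈ orb M N a := fun t ht => orb_stepM M N ht
  have hclN : ∀ t ∈ orb M N a, N t ∈ orb M N a := fun t ht => orb_stepN M N ht
  have hMa' : a ≤ M a := le_of_eq hMa.symm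
  have hNa' : a ≤ N a := by
    rcases Nat.eq_zero_or_pos k with hk0 | hk1
    · have h1 := hstop
      rw [hk0, hT0, hc0] at h1
      exact le_of_eq h1.symm
    · have h1 := hkc 0 hk1
      have h2 : c 1 = N a := by rw [hcs 0, hT0, hc0]
      rw [hc0, h2] at h1
      exact h1.lt.le
  have hdown : ∀ t ∈ orb M N a, ρ a < ρ t →
      (M t ∈ orb M N a ∧ M t ⋖ t) ∨ (N t ∈ orb M N a ∧ N t ⋖ t) := by
    intro t ht hrt
    obtain ⟨i, hik, rfl⟩ := hSorb t ht
    have hi1 : 1 ≤ i := by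
      rcases Nat.eq_zero_or_pos i with rfl | h
      · rw [hc0] at hrt; omega
      · exact h
    have e : i - 1 + 1 = i := by omega
    have hcovchain := hkc (i - 1) (by omega)
    have hinv := hcinv (i - 1)
    rw [e] at hcovchain hinv
    have hcov : T (i - 1) (c i) ⋖ c i := by rw [hinv]; exact hcovchain
    have hmem : T (i - 1) (c i) ∈ orb M N a := by rw [hinv]; exact hcO (i - 1)
    rcases hTor (i - 1) with h | h
    · rw [h] at hmem hcov; exact Or.inl ⟨hmem, hcov⟩
    · rw [h] at hmem hcov; exact Or.inr ⟨hmem, hcov⟩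
  have hIcc : orb M N a = Set.Icc a (c k) := by
    apply Set.Subset.antisymm
    · intro t ht
      exact ⟨hleast.2 ht, hgreat.2 ht⟩
    · exact icc_subset_orb hρcov hfin hM hN hOw hclM hclN haw hMa' hNa' hdown
        (orb_self M N a) hgreat
  have hchain : IsChain (· ≤ ·) (orb M N a) := by
    intro x hx y hy _
    obtain ⟨i, hik, rfl⟩ := hSorb x hx
    obtain ⟨j, hjk, rfl⟩ := hSorb y hy
    rcases le_total i j with h | h
    · left; exact hmono i j h hjk
    · right; exact hmono j i h hik
  have htop : M (c k) = c k ∨ N (c k) = c k := by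
    rcases hTor k with h | h
    · left; rw [← h]; exact hstop
    · right; rw [← h]; exact hstop
  refine ⟨a, c k, hleast, hgreat, hIcc, Or.inl ⟨⟨hchain, Or.inl hMa, htop⟩, ?_⟩⟩
  intro h2
  exact (h2.1 a (orb_self M N a)).1 hMa

lemma dihedral_case
    (hρcov : ∀ a b : P, a ⋖ b → ρ b = ρ a + 1) (hfin : (Set.Iic w).Finite)
    {M N : P → P} (hM : IsQSPMOn w M) (hN : IsQSPMOn w N)
    {a : P} (haw : a ≤ w) (hMa : a ⋖ M a) (hNa : a ⋖ N a)
    (hmin : ∀ t ∈ orb M N a, ρ a ≤ ρ t) :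
    ∃ x y : P, IsLeast (orb M N a) x ∧ IsGreatest (orb M N a) y ∧
      orb M N a = Set.Icc x y ∧
      Xor'
        (IsChain (· ≤ ·) (orb M N a) ∧ (M x = x ∨ N x = x) ∧ (M y = y ∨ N y = y))
        ((∀ t ∈ orb M N a, M t ≠ t ∧ N t ≠ t) ∧
          (∀ s ∈ orb M N a, ∀ t ∈ orb M N a, ρ s ≠ ρ t → s < t ∨ t < s) ∧
          ∀ k : ℕ, ρ x < k → k < ρ y → {t ∈ orb M N a | ρ t = k}.ncard = 2) := by
  classical
  obtain ⟨Tc, hTcdef⟩ : ∃ T : ℕ → P → P, ∀ i, T i = if Even i then M else N :=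
    ⟨fun i => if Even i then M else N, fun i => rfl⟩
  obtain ⟨Td, hTddef⟩ : ∃ T : ℕ → P → P, ∀ i, T i = if Even i then N else M :=
    ⟨fun i => if Even i then N else M, fun i => rfl⟩
  have hTc : ∀ i, IsQSPMOn w (Tc i) := by
    intro i; rw [hTcdef i]
    by_cases h : Even i
    · rw [if_pos h]; exact hM
    · rw [if_neg h]; exact hN
  have hTd : ∀ i, IsQSPMOn w (Td i) := by
    intro i; rw [hTddef i]
    by_cases h : Even i
    · rw [if_pos h]; exact hN
    · rw [if_neg h]; exact hM
  have hTorc : ∀ i, Tc i = M ∨ Tc i = N := by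
    intro i; rw [hTcdef i]
    by_cases h : Even i
    · rw [if_pos h]; exact Or.inl rfl
    · rw [if_neg h]; exact Or.inr rfl
  have hTord : ∀ i, Td i = M ∨ Td i = N := by
    intro i; rw [hTddef i]
    by_cases h : Even i
    · rw [if_pos h]; exact Or.inr rfl
    · rw [if_neg h]; exact Or.inl rfl
  have heven : ∀ i : ℕ, Even (i + 1) ↔ ¬ Even i := by
    intro i; rw [Nat.even_iff, Nat.even_iff]; omega
  have hTcd : ∀ i, Tc (i + 1) = Td i := by
    intro i; rw [hTcdef (i + 1), hTddef i]
    by_cases h : Even i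
    · rw [if_pos h, if_neg (fun hh => ((heven i).mp hh) h)]
    · rw [if_neg h, if_pos ((heven i).mpr h)]
  have hTdc : ∀ i, Td (i + 1) = Tc i := by
    intro i; rw [hTddef (i + 1), hTcdef i]
    by_cases h : Even i
    · rw [if_pos h, if_neg (fun hh => ((heven i).mp hh) h)]
    · rw [if_neg h, if_pos ((heven i).mpr h)]
  have hTc0 : Tc 0 = M := by rw [hTcdef 0, if_pos Even.zero]
  have hTd0 : Td 0 = N := by rw [hTddef 0, if_pos Even.zero]
  have haltcd : ∀ i, (Tc i = M ∧ Td i = N) ∨ (Tc i = N ∧ Td i = M) := by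
    intro i; rw [hTcdef i, hTddef i]
    by_cases h : Even i
    · rw [if_pos h, if_pos h]; exact Or.inl ⟨rfl, rfl⟩
    · rw [if_neg h, if_neg h]; exact Or.inr ⟨rfl, rfl⟩
  obtain ⟨c, hc0, hcs⟩ : ∃ c : ℕ → P, c 0 = a ∧ ∀ n, c (n + 1) = Tc n (c n) :=
    ⟨fun n => Nat.rec a (fun i x => Tc i x) n, rfl, fun n => rfl⟩
  obtain ⟨d, hd0, hds⟩ : ∃ d : ℕ → P, d 0 = a ∧ ∀ n, d (n + 1) = Td n (d n) :=
    ⟨fun n => Nat.rec a (fun i x => Td i x) n, rfl, fun n => rfl⟩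
  have hcw : ∀ n, c n ≤ w := by
    intro n; induction n with
    | zero => rw [hc0]; exact haw
    | succ n ih => rw [hcs n]; exact (hTc n).1 _ ih
  have hdw : ∀ n, d n ≤ w := by
    intro n; induction n with
    | zero => rw [hd0]; exact haw
    | succ n ih => rw [hds n]; exact (hTd n).1 _ ih
  have hcO : ∀ n, c n ∈ orb M N a := by
    intro n; induction n with
    | zero => rw [hc0]; exact orb_self M N a
    | succ n ih =>
      rw [hcs n]
      rcases hTorc n with h | h
      · rw [h]; exact orb_stepM M N ih
      · rw [h]; exact orb_stepN M N ih
  have hdO : ∀ n, d n ∈ orb M N a := by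
    intro n; induction n with
    | zero => rw [hd0]; exact orb_self M N a
    | succ n ih =>
      rw [hds n]
      rcases hTord n with h | h
      · rw [h]; exact orb_stepM M N ih
      · rw [h]; exact orb_stepN M N ih
  have hcinv : ∀ n, Tc n (c (n + 1)) = c n := by
    intro n; rw [hcs n]; exact (hTc n).2.1 _ (hcw n)
  have hdinv : ∀ n, Td n (d (n + 1)) = d n := by
    intro n; rw [hds n]; exact (hTd n).2.1 _ (hdw n)
  -- the fundamental ladder-climbing lemma
  have B : ∀ n, (∀ i, 1 ≤ i → i ≤ n → c i ≠ d i) →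
      ρ (c n) = ρ a + n ∧ ρ (d n) = ρ a + n ∧
      c n ⋖ c (n + 1) ∧ d n ⋖ d (n + 1) ∧ c n ⋖ d (n + 1) ∧ d n ⋖ c (n + 1) := by
    intro n
    induction n with
    | zero =>
      intro _
      have e1 : c 1 = M a := by rw [hcs 0, hTc0, hc0]
      have e2 : d 1 = N a := by rw [hds 0, hTd0, hd0]
      refine ⟨by rw [hc0]; omega, by rw [hd0]; omega, ?_, ?_, ?_, ?_⟩
      · rw [hc0, e1]; exact hMa
      · rw [hd0, e2]; exact hNa
      · rw [hc0, e2]; exact hNa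
      · rw [hd0, e1]; exact hMa
    | succ n ih =>
      intro hnm
      obtain ⟨rc, rd, cc, dd, cd, dc⟩ := ih (fun i h1 h2 => hnm i h1 (by omega))
      have rc1 : ρ (c (n + 1)) = ρ a + (n + 1) := by rw [hρcov _ _ cc, rc]; omega
      have rd1 : ρ (d (n + 1)) = ρ a + (n + 1) := by rw [hρcov _ _ dd, rd]; omega
      have hne : c (n + 1) ≠ d (n + 1) := hnm (n + 1) (by omega) le_rfl
      -- left chain goes up
      have hcs2 : c (n + 2) = Tc (n + 1) (c (n + 1)) := hcs (n + 1)
      have hds2 : d (n + 2) = Td (n + 1) (d (n + 1)) := hds (n + 1)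
      have e1 : Tc (n + 1) (d n) = d (n + 1) := by rw [hTcd n, ← hds n]
      have hl : d (n + 1) < c (n + 2) := by
        have hlift := (hTc (n + 1)).2.2.2 (d n) (c (n + 1)) (hdw n) (hcw (n + 1)) dc
          (by rw [e1]; exact fun hh => hne hh.symm)
        rw [e1, ← hcs2] at hlift
        exact hlift
      have hrl : ρ (d (n + 1)) < ρ (c (n + 2)) := rank_lt hρcov hfin (hcw (n + 2)) hl
      have cc1 : c (n + 1) ⋖ c (n + 2) := by
        have h3 := (hTc (n + 1)).2.2.1 (c (n + 1)) (hcw (n + 1))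
        rw [← hcs2] at h3
        rcases h3 with h | h | h
        · exfalso; have := hρcov _ _ h; omega
        · exfalso; rw [h] at hrl; omega
        · exact h
      have rc2 : ρ (c (n + 2)) = ρ a + (n + 2) := by rw [hρcov _ _ cc1, rc1]; omega
      have cd1 : d (n + 1) ⋖ c (n + 2) := covby_of_lt_rank hρcov hfin (hcw (n + 2)) hl (by omega)
      -- right chain goes up
      have e2 : Td (n + 1) (c n) = c (n + 1) := by rw [hTdc n, ← hcs n]
      have hl' : c (n + 1) < d (n + 2) := by
        have hlift := (hTd (n + 1)).2.2.2 (c n) (d (n + 1)) (hcw n) (hdw (n + 1)) cd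
          (by rw [e2]; exact hne)
        rw [e2, ← hds2] at hlift
        exact hlift
      have hrl' : ρ (c (n + 1)) < ρ (d (n + 2)) := rank_lt hρcov hfin (hdw (n + 2)) hl'
      have dd1 : d (n + 1) ⋖ d (n + 2) := by
        have h3 := (hTd (n + 1)).2.2.1 (d (n + 1)) (hdw (n + 1))
        rw [← hds2] at h3
        rcases h3 with h | h | h
        · exfalso; have := hρcov _ _ h; omega
        · exfalso; rw [h] at hrl'; omega
        · exact h
      have rd2 : ρ (d (n + 2)) = ρ a + (n + 2) := by rw [hρcov _ _ dd1, rd1]; omega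
      have dc1 : c (n + 1) ⋖ d (n + 2) := covby_of_lt_rank hρcov hfin (hdw (n + 2)) hl' (by omega)
      exact ⟨rc1, rd1, cc1, dd1, dc1, cd1⟩
  -- the two chains must merge
  have hexm : ∃ n, c (n + 1) = d (n + 1) := by
    by_contra hcon
    push_neg at hcon
    have hall : ∀ n, ρ (c n) = ρ a + n := by
      intro n
      refine (B n ?_).1
      intro i h1 _
      have e : i - 1 + 1 = i := by omega
      rw [← e]; exact hcon (i - 1)
    have h1 : ρ (c (ρ w + 1)) ≤ ρ w := rank_le hρcov hfin le_rfl (hcw _)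
    rw [hall] at h1
    omega
  set kf := Nat.find hexm with hkfdef
  set K := kf + 1 with hKdef
  have hmerge : c K = d K := Nat.find_spec hexm
  have hK1 : 1 ≤ K := by omega
  have hnomerge : ∀ i, 1 ≤ i → i < K → c i ≠ d i := by
    intro i h1 h2
    have h3 := Nat.find_min hexm (m := i - 1) (by omega)
    have e : i - 1 + 1 = i := by omega
    rwa [e] at h3
  have hB : ∀ n, n < K →
      ρ (c n) = ρ a + n ∧ ρ (d n) = ρ a + n ∧
      c n ⋖ c (n + 1) ∧ d n ⋖ d (n + 1) ∧ c n ⋖ d (n + 1) ∧ d n ⋖ c (n + 1) :=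
    fun n hn => B n (fun i h1 h2 => hnomerge i h1 (by omega))
  have hrc : ∀ i, i ≤ K → ρ (c i) = ρ a + i := by
    intro i
    induction i with
    | zero => intro _; rw [hc0]; omega
    | succ i ih =>
      intro hi
      rw [hρcov _ _ (hB i (by omega)).2.2.1, ih (by omega)]; omega
  have hrd : ∀ i, i ≤ K → ρ (d i) = ρ a + i := by
    intro i
    induction i with
    | zero => intro _; rw [hd0]; omega
    | succ i ih =>
      intro hi
      rw [hρcov _ _ (hB i (by omega)).2.2.2.1, ih (by omega)]; omega
  have hlt : ∀ j, j ≤ K → ∀ i, i < j →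
      c i < c j ∧ c i < d j ∧ d i < c j ∧ d i < d j := by
    intro j
    induction j with
    | zero => intro _ i hi; omega
    | succ j ih =>
      intro hjK i hi
      obtain ⟨_, _, cc, dd, cd, dc⟩ := hB j (by omega)
      by_cases h : i = j
      · subst h
        exact ⟨cc.lt, cd.lt, dc.lt, dd.lt⟩
      · have h4 := ih (by omega) i (by omega)
        exact ⟨h4.1.trans cc.lt, h4.1.trans cd.lt, h4.2.2.1.trans cc.lt, h4.2.2.1.trans cd.lt⟩
  have eK : K - 1 + 1 = K := by omega
  have hTcK : Tc K = Td (K - 1) := by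
    conv_lhs => rw [← eK]
    exact hTcd (K - 1)
  have hTdK : Td K = Tc (K - 1) := by
    conv_lhs => rw [← eK]
    exact hTdc (K - 1)
  have hcKd : Tc K (c K) = d (K - 1) := by
    rw [hTcK, hmerge]
    have h2 := hdinv (K - 1)
    rwa [eK] at h2
  have hdKc : Td K (d K) = c (K - 1) := by
    rw [hTdK, ← hmerge]
    have h2 := hcinv (K - 1)
    rwa [eK] at h2
  have hcinv' : ∀ i, 1 ≤ i → Tc (i - 1) (c i) = c (i - 1) := by
    intro i h1
    have e : i - 1 + 1 = i := by omega
    have h2 := hcinv (i - 1); rwa [e] at h2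
  have hdinv' : ∀ i, 1 ≤ i → Td (i - 1) (d i) = d (i - 1) := by
    intro i h1
    have e : i - 1 + 1 = i := by omega
    have h2 := hdinv (i - 1); rwa [e] at h2
  have hTcd' : ∀ i, 1 ≤ i → Td i = Tc (i - 1) := by
    intro i h1
    have e : i - 1 + 1 = i := by omega
    conv_lhs => rw [← e]
    exact hTdc (i - 1)
  have hTdc' : ∀ i, 1 ≤ i → Tc i = Td (i - 1) := by
    intro i h1
    have e : i - 1 + 1 = i := by omega
    conv_lhs => rw [← e]
    exact hTcd (i - 1)
  have himgc : ∀ X : P → P, X = M ∨ X = N → ∀ i, i ≤ K →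
      ∃ j, j ≤ K ∧ j ≠ i ∧ (c j = X (c i) ∨ d j = X (c i)) := by
    intro X hX i hiK
    by_cases hXT : X = Tc i
    · subst hXT
      rcases Nat.lt_or_ge i K with h | h
      · exact ⟨i + 1, by omega, by omega, Or.inl (hcs i)⟩
      · have hik2 : i = K := le_antisymm hiK h
        refine ⟨K - 1, by omega, by omega, Or.inr ?_⟩
        rw [hik2]
        exact hcKd.symm
    · have hXT2 : X = Td i := by
        rcases haltcd i with ⟨h1, h2⟩ | ⟨h1, h2⟩ <;> rcases hX with rfl | rfl
        · exact absurd h1.symm hXT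
        · exact h2.symm
        · exact h2.symm
        · exact absurd h1.symm hXT
      rcases Nat.eq_zero_or_pos i with rfl | hi
      · refine ⟨1, hK1, by omega, Or.inr ?_⟩
        rw [hXT2, hc0, ← hd0]
        exact hds 0
      · refine ⟨i - 1, by omega, by omega, Or.inl ?_⟩
        rw [hXT2, hTcd' i hi]
        exact (hcinv' i hi).symm
  have himgd : ∀ X : P → P, X = M ∨ X = N → ∀ i, i ≤ K →
      ∃ j, j ≤ K ∧ j ≠ i ∧ (c j = X (d i) ∨ d j = X (d i)) := by
    intro X hX i hiK
    by_cases hXT : X = Td i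
    · subst hXT
      rcases Nat.lt_or_ge i K with h | h
      · exact ⟨i + 1, by omega, by omega, Or.inr (hds i)⟩
      · have hik2 : i = K := le_antisymm hiK h
        refine ⟨K - 1, by omega, by omega, Or.inl ?_⟩
        rw [hik2]
        exact hdKc.symm
    · have hXT2 : X = Tc i := by
        rcases haltcd i with ⟨h1, h2⟩ | ⟨h1, h2⟩ <;> rcases hX with rfl | rfl
        · exact h1.symm
        · exact absurd h2.symm hXT
        · exact absurd h2.symm hXT
        · exact h1.symm
      rcases Nat.eq_zero_or_pos i with rfl | hi
      · refine ⟨1, hK1, by omega, Or.inl ?_⟩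
        rw [hXT2, hd0, ← hc0]
        exact hcs 0
      · refine ⟨i - 1, by omega, by omega, Or.inr ?_⟩
        rw [hXT2, hTdc' i hi]
        exact (hdinv' i hi).symm
  have hSorb : ∀ v ∈ orb M N a, ∃ i, i ≤ K ∧ (c i = v ∨ d i = v) := by
    intro v hv
    induction hv with
    | refl => exact ⟨0, by omega, Or.inl hc0⟩
    | @tail p q hp step ih =>
      obtain ⟨i, hiK, hrep⟩ := ih
      have hXq : ∃ X : P → P, (X = M ∨ X = N) ∧ X p = q := by
        rcases step with h | h
        · exact ⟨M, Or.inl rfl, h⟩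
        · exact ⟨N, Or.inr rfl, h⟩
      obtain ⟨X, hX, hXp⟩ := hXq
      rcases hrep with h | h
      · obtain ⟨j, hj, _, hj2⟩ := himgc X hX i hiK
        rw [h, hXp] at hj2
        exact ⟨j, hj, hj2⟩
      · obtain ⟨j, hj, _, hj2⟩ := himgd X hX i hiK
        rw [h, hXp] at hj2
        exact ⟨j, hj, hj2⟩
  have hleast : IsLeast (orb M N a) a := by
    refine ⟨orb_self M N a, ?_⟩
    intro t ht
    obtain ⟨i, hiK, hrep⟩ := hSorb t ht
    rcases Nat.eq_zero_or_pos i with rfl | hi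
    · rcases hrep with h | h
      · rw [← h, hc0]
      · rw [← h, hd0]
    · have h4 := hlt i hiK 0 hi
      rw [hc0] at h4
      rcases hrep with h | h
      · rw [← h]; exact h4.1.le
      · rw [← h]; exact h4.2.1.le
  have hgreat : IsGreatest (orb M N a) (c K) := by
    refine ⟨hcO K, ?_⟩
    intro t ht
    obtain ⟨i, hiK, hrep⟩ := hSorb t ht
    rcases Nat.lt_or_ge i K with h | h
    · have h4 := hlt K le_rfl i h
      rcases hrep with hrep | hrep
      · rw [← hrep]; exact h4.1.le
      · rw [← hrep]; exact h4.2.2.1.le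
    · have hik2 : i = K := le_antisymm hiK h
      rcases hrep with hrep | hrep
      · rw [← hrep, hik2]
      · rw [← hrep, hik2, ← hmerge]
  have hdown : ∀ t ∈ orb M N a, ρ a < ρ t →
      (M t ∈ orb M N a ∧ M t ⋖ t) ∨ (N t ∈ orb M N a ∧ N t ⋖ t) := by
    intro t ht hrt
    obtain ⟨i, hiK, hrep⟩ := hSorb t ht
    have hi1 : 1 ≤ i := by
      rcases Nat.eq_zero_or_pos i with rfl | h
      · exfalso
        rcases hrep with h | h
        · rw [← h, hc0] at hrt; omega
        · rw [← h, hd0] at hrt; omega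
      · exact h
    have eK2 : i - 1 + 1 = i := by omega
    rcases hrep with hrep | hrep
    · have hcov : Tc (i - 1) t ⋖ t := by
        rw [← hrep, hcinv' i hi1]
        have h5 := (hB (i - 1) (by omega)).2.2.1
        rwa [eK2] at h5
      have hmem : Tc (i - 1) t ∈ orb M N a := by
        rw [← hrep, hcinv' i hi1]; exact hcO (i - 1)
      rcases hTorc (i - 1) with h | h
      · rw [h] at hcov hmem; exact Or.inl ⟨hmem, hcov⟩
      · rw [h] at hcov hmem; exact Or.inr ⟨hmem, hcov⟩
    · have hcov : Td (i - 1) t ⋖ t := by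
        rw [← hrep, hdinv' i hi1]
        have h5 := (hB (i - 1) (by omega)).2.2.2.1
        rwa [eK2] at h5
      have hmem : Td (i - 1) t ∈ orb M N a := by
        rw [← hrep, hdinv' i hi1]; exact hdO (i - 1)
      rcases hTord (i - 1) with h | h
      · rw [h] at hcov hmem; exact Or.inl ⟨hmem, hcov⟩
      · rw [h] at hcov hmem; exact Or.inr ⟨hmem, hcov⟩
  have hOw : ∀ t ∈ orb M N a, t ≤ w := fun t ht => orb_le_w hM hN haw ht
  have hclM : ∀ t ∈ orb M N a, M t ∈ orb M N a := fun t ht => orb_stepM M N ht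
  have hclN : ∀ t ∈ orb M N a, N t ∈ orb M N a := fun t ht => orb_stepN M N ht
  have hIcc : orb M N a = Set.Icc a (c K) := by
    apply Set.Subset.antisymm
    · intro t ht
      exact ⟨hleast.2 ht, hgreat.2 ht⟩
    · exact icc_subset_orb hρcov hfin hM hN hOw hclM hclN haw hMa.lt.le hNa.lt.le hdown
        (orb_self M N a) hgreat
  have hnofix : ∀ t ∈ orb M N a, M t ≠ t ∧ N t ≠ t := by
    intro t ht
    have key : ∀ X : P → P, X = M ∨ X = N → X t ≠ t := by
      intro X hX heq
      obtain ⟨i, hiK, hrep⟩ := hSorb t ht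
      rcases hrep with hrep | hrep
      · obtain ⟨j, hjK, hji, hj2⟩ := himgc X hX i hiK
        rw [hrep, heq] at hj2
        have hρt : ρ t = ρ a + j := by
          rcases hj2 with h | h
          · rw [← h]; exact hrc j hjK
          · rw [← h]; exact hrd j hjK
        rw [← hrep, hrc i hiK] at hρt
        omega
      · obtain ⟨j, hjK, hji, hj2⟩ := himgd X hX i hiK
        rw [hrep, heq] at hj2
        have hρt : ρ t = ρ a + j := by
          rcases hj2 with h | h
          · rw [← h]; exact hrc j hjK
          · rw [← h]; exact hrd j hjK
        rw [← hrep, hrd i hiK] at hρt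
        omega
    exact ⟨key M (Or.inl rfl), key N (Or.inr rfl)⟩
  have hcomp : ∀ s ∈ orb M N a, ∀ t ∈ orb M N a, ρ s ≠ ρ t → s < t ∨ t < s := by
    intro s hs t ht hne
    obtain ⟨i, hiK, hrs⟩ := hSorb s hs
    obtain ⟨j, hjK, hrt⟩ := hSorb t ht
    have hris : ρ s = ρ a + i := by
      rcases hrs with h | h
      · rw [← h]; exact hrc i hiK
      · rw [← h]; exact hrd i hiK
    have hrit : ρ t = ρ a + j := by
      rcases hrt with h | h
      · rw [← h]; exact hrc j hjK
      · rw [← h]; exact hrd j hjK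
    rcases Nat.lt_or_ge i j with h | h
    · left
      have h4 := hlt j hjK i h
      rcases hrs with hrs | hrs <;> rcases hrt with hrt | hrt
      · rw [← hrs, ← hrt]; exact h4.1
      · rw [← hrs, ← hrt]; exact h4.2.1
      · rw [← hrs, ← hrt]; exact h4.2.2.1
      · rw [← hrs, ← hrt]; exact h4.2.2.2
    · right
      have hji : j < i := by omega
      have h4 := hlt i hiK j hji
      rcases hrs with hrs | hrs <;> rcases hrt with hrt | hrt
      · rw [← hrs, ← hrt]; exact h4.1
      · rw [← hrs, ← hrt]; exact h4.2.2.1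
      · rw [← hrs, ← hrt]; exact h4.2.1
      · rw [← hrs, ← hrt]; exact h4.2.2.2
  have hrb : ρ (c K) = ρ a + K := hrc K le_rfl
  have hcount : ∀ kk : ℕ, ρ a < kk → kk < ρ (c K) → {t ∈ orb M N a | ρ t = kk}.ncard = 2 := by
    intro kk h1 h2
    rw [hrb] at h2
    have hi1 : 1 ≤ kk - ρ a := by omega
    have hiK : kk - ρ a < K := by omega
    have hset : {t ∈ orb M N a | ρ t = kk} = {c (kk - ρ a), d (kk - ρ a)} := by
      ext t
      simp only [Set.mem_setOf_eq, Set.mem_insert_iff, Set.mem_singleton_iff]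
      constructor
      · rintro ⟨ht, hρt⟩
        obtain ⟨j, hjK, hrep⟩ := hSorb t ht
        have hρt2 : ρ t = ρ a + j := by
          rcases hrep with h | h
          · rw [← h]; exact hrc j hjK
          · rw [← h]; exact hrd j hjK
        have hj : j = kk - ρ a := by omega
        subst hj
        rcases hrep with h | h
        · left; exact h.symm
        · right; exact h.symm
      · rintro (rfl | rfl)
        · exact ⟨hcO _, by rw [hrc _ (by omega)]; omega⟩
        · exact ⟨hdO _, by rw [hrd _ (by omega)]; omega⟩
    rw [hset]
    exact Set.ncard_pair (hnomerge _ hi1 hiK)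
  refine ⟨a, c K, hleast, hgreat, hIcc, Or.inr ⟨⟨hnofix, hcomp, hcount⟩, ?_⟩⟩
  rintro ⟨-, hfix, -⟩
  rcases hfix with h | h
  · exact hMa.lt.ne' h
  · exact hNa.lt.ne' h

end OrbitProofX

open OrbitProofX in
/-- Every orbit of `⟨M,N⟩` on `P_{≤w}` has a minimum and a maximum, is an interval of
`P_{≤w}`, and is either chain-like or dihedral (exactly one of the two). -/
theorem orbit_min_max_interval_dichotomy {P : Type*} [PartialOrder P] [OrderBot P]
    (ρ : P → ℕ) (hρ0 : ρ ⊥ = 0) (hρcov : ∀ a b : P, a ⋖ b → ρ b = ρ a + 1)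
    (hP : IsPircon P)
    {w : P} {M N : P → P} (hM : IsQSPMOn w M) (hN : IsQSPMOn w N)
    {u₀ : P} (hu₀ : u₀ ≤ w) :
    ∃ a b : P, IsLeast (orb M N u₀) a ∧ IsGreatest (orb M N u₀) b ∧
      orb M N u₀ = Set.Icc a b ∧
      Xor'
        (IsChain (· ≤ ·) (orb M N u₀) ∧ (M a = a ∨ N a = a) ∧ (M b = b ∨ N b = b))
        ((∀ t ∈ orb M N u₀, M t ≠ t ∧ N t ≠ t) ∧
          (∀ s ∈ orb M N u₀, ∀ t ∈ orb M N u₀, ρ s ≠ ρ t → s < t ∨ t < s) ∧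
          ∀ k : ℕ, ρ a < k → k < ρ b → {t ∈ orb M N u₀ | ρ t = k}.ncard = 2) := by
  classical
  have hfin : (Set.Iic w).Finite := by
    by_cases hw : IsMin w
    · have hsub : Set.Iic w ⊆ {w} := fun y hy => le_antisymm hy (hw hy)
      exact (Set.finite_singleton w).subset hsub
    · exact (hP w hw).1
  have hOsub : orb M N u₀ ⊆ Set.Iic w := fun v hv => orb_le_w hM hN hu₀ hv
  have hOfin : (orb M N u₀).Finite := hfin.subset hOsub
  obtain ⟨a, haO, hamin⟩ :=
    Set.exists_min_image (orb M N u₀) ρ hOfin ⟨u₀, orb_self M N u₀⟩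
  have haw : a ≤ w := orb_le_w hM hN hu₀ haO
  have horb : orb M N a = orb M N u₀ := orb_eq_of_mem hM hN hu₀ haO
  have hmin' : ∀ t ∈ orb M N a, ρ a ≤ ρ t := by rw [horb]; exact hamin
  have hMa : M a = a ∨ a ⋖ M a := by
    rcases hM.2.2.1 a haw with h | h | h
    · exfalso
      have h1 := rank_lt hρcov hfin haw h.lt
      have h2 := hmin' (M a) (orb_stepM M N (orb_self M N a))
      omega
    · exact Or.inl h
    · exact Or.inr h
  have hNa : N a = a ∨ a ⋖ N a := by
    rcases hN.2.2.1 a haw with h | h | h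
    · exfalso
      have h1 := rank_lt hρcov hfin haw h.lt
      have h2 := hmin' (N a) (orb_stepN M N (orb_self M N a))
      omega
    · exact Or.inl h
    · exact Or.inr h
  rw [← horb]
  rcases hMa with hfixM | hcovM
  · exact chain_case hρcov hfin hM hN haw hfixM hmin'
  rcases hNa with hfixN | hcovN
  · -- N fixes a: apply the chain case with the two matchings swapped
    have hminswap : ∀ t ∈ orb N M a, ρ a ≤ ρ t := by
      rw [← orb_comm M N a]; exact hmin'
    have hswap := chain_case hρcov hfin hN hM haw hfixN hminswap
    rw [← orb_comm M N a] at hswap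
    obtain ⟨x, y, h1, h2, h3, h4⟩ := hswap
    refine ⟨x, y, h1, h2, h3, ?_⟩
    rcases h4 with ⟨⟨hc, hx, hy⟩, hnr⟩ | ⟨⟨f1, f2, f3⟩, hnl⟩
    · refine Or.inl ⟨⟨hc, hx.symm, hy.symm⟩, ?_⟩
      intro hr
      exact hnr ⟨fun t ht => ⟨(hr.1 t ht).2, (hr.1 t ht).1⟩, hr.2.1, hr.2.2⟩
    · refine Or.inr ⟨⟨fun t ht => ⟨(f1 t ht).2, (f1 t ht).1⟩, f2, f3⟩, ?_⟩
      intro hl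
      exact hnl ⟨hl.1, hl.2.1.symm, hl.2.2.symm⟩
  · exact dihedral_case hρcov hfin hM hN haw hcovM hcovN hmin'
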